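/- For all n ∈ ℤ₊ and 0 < q < 1, a > 0, the quantity ω_n(a,q) = ∑_{k=0}^n [n choose k]_q q^{-k(n-k)} a^k satisfies a^{n/2} q^{-n(n-1)/4} ≤ ω_n(a,q) ≤ (1+a)^n q^{-n²/4}. -/
import Mathlib


open Finset

/-- `(q;q)_k = ∏_{i=1}^{k} (1 - qⁱ)`. -/
noncomputable def qqPoch (q : ℝ) (k : ℕ) : ℝ := ∏ i ∈ range k, (1 - q ^ (i + 1))

/-- q-binomial (Gaussian) coefficient `[n choose k]_q`. -/
noncomputable def qBinom (q : ℝ) (n k : ℕ) : ℝ :=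
  qqPoch q n / (qqPoch q k * qqPoch q (n - k))

lemma factor_pos {q : ℝ} (hq0 : 0 < q) (hq1 : q < 1) (i : ℕ) : 0 < 1 - q ^ (i + 1) := by
  have : q ^ (i + 1) < 1 := pow_lt_one₀ hq0.le hq1 (Nat.succ_ne_zero i)
  linarith

lemma qqPoch_pos {q : ℝ} (hq0 : 0 < q) (hq1 : q < 1) (k : ℕ) : 0 < qqPoch q k :=
  Finset.prod_pos fun i _ => factor_pos hq0 hq1 i

lemma qqPoch_succ (q : ℝ) (k : ℕ) : qqPoch q (k + 1) = qqPoch q k * (1 - q ^ (k + 1)) :=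
  Finset.prod_range_succ _ _

lemma qqPoch_zero (q : ℝ) : qqPoch q 0 = 1 := Finset.prod_range_zero _

lemma qBinom_self (q : ℝ) (n : ℕ) (h : qqPoch q n ≠ 0) : qBinom q n n = 1 := by
  simp [qBinom, qqPoch_zero, div_self h]

lemma qBinom_zero (q : ℝ) (n : ℕ) (h : qqPoch q n ≠ 0) : qBinom q n 0 = 1 := by
  simp [qBinom, qqPoch_zero, div_self h]

lemma qBinom_ge_one {q : ℝ} (hq0 : 0 < q) (hq1 : q < 1) {n k : ℕ} (h : k ≤ n) :
    1 ≤ qBinom q n k := by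
  have hadd : ∀ m : ℕ, qqPoch q (k + m) = qqPoch q k * ∏ i ∈ range m, (1 - q ^ (k + i + 1)) := by
    intro m
    rw [qqPoch, qqPoch, Finset.prod_range_add]
  have hsplit : qqPoch q n = qqPoch q k * ∏ i ∈ range (n - k), (1 - q ^ (k + i + 1)) := by
    have h2 := hadd (n - k)
    rwa [Nat.add_sub_cancel' h] at h2
  have hle : qqPoch q (n - k) ≤ ∏ i ∈ range (n - k), (1 - q ^ (k + i + 1)) := by
    refine Finset.prod_le_prod (fun i _ => (factor_pos hq0 hq1 i).le) (fun i _ => ?_)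
    have : q ^ (k + i + 1) ≤ q ^ (i + 1) :=
      pow_le_pow_of_le_one hq0.le hq1.le (by omega)
    linarith
  rw [qBinom, le_div_iff₀ (mul_pos (qqPoch_pos hq0 hq1 k) (qqPoch_pos hq0 hq1 (n - k)))]
  calc 1 * (qqPoch q k * qqPoch q (n - k)) = qqPoch q k * qqPoch q (n - k) := one_mul _
  _ ≤ qqPoch q k * ∏ i ∈ range (n - k), (1 - q ^ (k + i + 1)) := by
      exact mul_le_mul_of_nonneg_left hle (qqPoch_pos hq0 hq1 k).le
  _ = qqPoch q n := hsplit.symm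

lemma qBinom_pascal {q : ℝ} (hq0 : 0 < q) (hq1 : q < 1) (k m : ℕ) :
    qBinom q (k + m + 2) (k + 1) =
      qBinom q (k + m + 1) (k + 1) + q ^ (m + 1) * qBinom q (k + m + 1) k := by
  have e1 : (k + m + 2) - (k + 1) = m + 1 := by omega
  have e2 : (k + m + 1) - (k + 1) = m := by omega
  have e3 : (k + m + 1) - k = m + 1 := by omega
  unfold qBinom
  rw [e1, e2, e3]
  rw [show k + m + 2 = (k + m + 1) + 1 from rfl, qqPoch_succ q (k + m + 1),
    qqPoch_succ q k, qqPoch_succ q m]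
  have h1 : qqPoch q (k + m + 1) ≠ 0 := (qqPoch_pos hq0 hq1 _).ne'
  have h2 : qqPoch q k ≠ 0 := (qqPoch_pos hq0 hq1 _).ne'
  have h3 : qqPoch q m ≠ 0 := (qqPoch_pos hq0 hq1 _).ne'
  have h4 : (1 : ℝ) - q ^ (k + 1) ≠ 0 := (factor_pos hq0 hq1 k).ne'
  have h5 : (1 : ℝ) - q ^ (m + 1) ≠ 0 := (factor_pos hq0 hq1 m).ne'
  field_simp
  ring

lemma qBinom_le_choose {q : ℝ} (hq0 : 0 < q) (hq1 : q < 1) :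
    ∀ n k : ℕ, k ≤ n → qBinom q n k ≤ (n.choose k : ℝ) := by
  intro n
  induction n with
  | zero =>
    intro k hk
    interval_cases k
    simp [qBinom_zero q 0 (qqPoch_pos hq0 hq1 0).ne']
  | succ n ih =>
    intro k hk
    match k with
    | 0 =>
      simp [qBinom_zero q (n+1) (qqPoch_pos hq0 hq1 _).ne']
    | k + 1 =>
      by_cases hkn : k + 1 ≤ n
      · obtain ⟨m, rfl⟩ : ∃ m, n = k + m + 1 := ⟨n - k - 1, by omega⟩
        rw [show k + m + 1 + 1 = k + m + 2 from rfl, qBinom_pascal hq0 hq1]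
        have b1 : qBinom q (k + m + 1) (k + 1) ≤ ((k + m + 1).choose (k + 1) : ℝ) :=
          ih _ (by omega)
        have b2 : qBinom q (k + m + 1) k ≤ ((k + m + 1).choose k : ℝ) := ih _ (by omega)
        have hq : q ^ (m + 1) ≤ 1 := pow_le_one₀ hq0.le hq1.le
        have hb : (1 : ℝ) ≤ qBinom q (k + m + 1) k := qBinom_ge_one hq0 hq1 (by omega)
        have b2' : q ^ (m + 1) * qBinom q (k + m + 1) k ≤ 1 * ((k + m + 1).choose k : ℝ) :=
          mul_le_mul hq b2 (by linarith) one_pos.le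
        rw [one_mul] at b2'
        have : ((k + m + 2).choose (k + 1) : ℝ)
            = ((k + m + 1).choose (k + 1) : ℝ) + ((k + m + 1).choose k : ℝ) := by
          rw [show k + m + 2 = (k + m + 1) + 1 from rfl]
          push_cast [Nat.choose_succ_succ' (k + m + 1) k]
          ring
        rw [this]
        linarith
      · have hk' : k = n := by omega
        subst hk'
        rw [qBinom_self q (k+1) (qqPoch_pos hq0 hq1 _).ne']
        exact_mod_cast Nat.one_le_iff_ne_zero.mpr (Nat.choose_self (k+1) ▸ Nat.one_ne_zero)

lemma lower_aux {a q : ℝ} (ha : 0 < a) (hq0 : 0 < q) (hq1 : q < 1) {n k₀ : ℕ}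
    (hk : k₀ ≤ n) (hprod : (n : ℝ) * ((n : ℝ) - 1) ≤ 4 * (k₀ : ℝ) * ((n : ℝ) - (k₀ : ℝ)))
    (hak : a ^ ((n : ℝ) / 2) ≤ a ^ (k₀ : ℝ)) :
    a ^ ((n : ℝ) / 2) * q ^ (-((n : ℝ) * ((n : ℝ) - 1)) / 4) ≤
      ∑ k ∈ range (n + 1), qBinom q n k * q ^ (-((k : ℤ) * ((n : ℤ) - (k : ℤ)))) * a ^ k := by
  have hterm : ∀ i ∈ range (n + 1),
      0 ≤ qBinom q n i * q ^ (-((i : ℤ) * ((n : ℤ) - (i : ℤ)))) * a ^ i := by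
    intro i hi
    have hi' : i ≤ n := by simpa using Nat.lt_succ_iff.mp (Finset.mem_range.mp hi)
    have h1 := qBinom_ge_one hq0 hq1 hi'
    have h2 : (0 : ℝ) < q ^ (-((i : ℤ) * ((n : ℤ) - (i : ℤ)))) := zpow_pos hq0 _
    have h3 : (0 : ℝ) < a ^ i := pow_pos ha i
    exact mul_nonneg (mul_nonneg (by linarith) h2.le) h3.le
  have hmem : k₀ ∈ range (n + 1) := Finset.mem_range.mpr (by omega)
  have hsingle := Finset.single_le_sum hterm hmem
  refine le_trans ?_ hsingle
  -- bound the single term from below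
  have hqb := qBinom_ge_one hq0 hq1 hk
  have hz : q ^ (-((k₀ : ℤ) * ((n : ℤ) - (k₀ : ℤ)))) =
      q ^ (-((k₀ : ℝ) * ((n : ℝ) - (k₀ : ℝ)))) := by
    rw [← Real.rpow_intCast q (-((k₀ : ℤ) * ((n : ℤ) - (k₀ : ℤ))))]
    push_cast
    ring_nf
  have hqle : q ^ (-((n : ℝ) * ((n : ℝ) - 1)) / 4) ≤
      q ^ (-((k₀ : ℝ) * ((n : ℝ) - (k₀ : ℝ)))) := by
    apply Real.rpow_le_rpow_of_exponent_ge hq0 hq1.le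
    linarith
  have hpow : a ^ (k₀ : ℝ) = a ^ k₀ := Real.rpow_natCast a k₀
  have h1 : a ^ ((n : ℝ) / 2) * q ^ (-((n : ℝ) * ((n : ℝ) - 1)) / 4) ≤
      a ^ (k₀ : ℝ) * q ^ (-((k₀ : ℝ) * ((n : ℝ) - (k₀ : ℝ)))) := by
    apply mul_le_mul hak hqle (Real.rpow_pos_of_pos hq0 _).le
      (Real.rpow_pos_of_pos ha _).le
  calc a ^ ((n : ℝ) / 2) * q ^ (-((n : ℝ) * ((n : ℝ) - 1)) / 4)
      ≤ a ^ (k₀ : ℝ) * q ^ (-((k₀ : ℝ) * ((n : ℝ) - (k₀ : ℝ)))) := h1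
    _ = 1 * q ^ (-((k₀ : ℤ) * ((n : ℤ) - (k₀ : ℤ)))) * a ^ k₀ := by
        rw [hz, hpow]; ring
    _ ≤ qBinom q n k₀ * q ^ (-((k₀ : ℤ) * ((n : ℤ) - (k₀ : ℤ)))) * a ^ k₀ := by
        have h2 : (0 : ℝ) < q ^ (-((k₀ : ℤ) * ((n : ℤ) - (k₀ : ℤ)))) := zpow_pos hq0 _
        have h3 : (0 : ℝ) < a ^ k₀ := pow_pos ha k₀
        exact mul_le_mul_of_nonneg_right
          (mul_le_mul_of_nonneg_right hqb h2.le) h3.le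

/-- Bounds `a^{n/2} q^{-n(n-1)/4} ≤ ωₙ(a,q) ≤ (1+a)ⁿ q^{-n²/4}`. -/
theorem stmt16 (a q : ℝ) (ha : 0 < a) (hq0 : 0 < q) (hq1 : q < 1)
    (ω : ℕ → ℝ)
    (hω : ∀ n : ℕ, ω n = ∑ k ∈ range (n + 1),
      qBinom q n k * q ^ (-(k * (n - k) : ℤ)) * a ^ k) :
    ∀ n : ℕ,
      a ^ ((n : ℝ) / 2) * q ^ (-(n * (n - 1) : ℝ) / 4) ≤ ω n
      ∧ ω n ≤ (1 + a) ^ n * q ^ (-((n : ℝ) ^ 2) / 4) := by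
  intro n
  rw [hω n]
  constructor
  · -- lower bound
    by_cases hA : 1 ≤ a
    · -- use k₀ = (n+1)/2
      refine lower_aux ha hq0 hq1 (n := n) (k₀ := (n + 1) / 2) (by omega) ?_ ?_
      · rcases Nat.even_or_odd n with ⟨m, hm⟩ | ⟨m, hm⟩
        · subst hm
          have : (m + m + 1) / 2 = m := by omega
          rw [this]; push_cast; nlinarith
        · subst hm
          have : (2 * m + 1 + 1) / 2 = m + 1 := by omega
          rw [this]; push_cast; nlinarith
      · apply Real.rpow_le_rpow_of_exponent_le hA
        have : n ≤ 2 * ((n + 1) / 2) := by omega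
        have := (Nat.cast_le (α := ℝ)).mpr this
        push_cast at this ⊢
        linarith
    · refine lower_aux ha hq0 hq1 (n := n) (k₀ := n / 2) (by omega) ?_ ?_
      · rcases Nat.even_or_odd n with ⟨m, hm⟩ | ⟨m, hm⟩
        · subst hm
          have : (m + m) / 2 = m := by omega
          rw [this]; push_cast; nlinarith
        · subst hm
          have : (2 * m + 1) / 2 = m := by omega
          rw [this]; push_cast; nlinarith
      · apply Real.rpow_le_rpow_of_exponent_ge ha (le_of_not_ge hA)
        have : 2 * (n / 2) ≤ n := by omega
        have := (Nat.cast_le (α := ℝ)).mpr this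
        push_cast at this ⊢
        linarith
  · -- upper bound
    have step : ∀ k ∈ range (n + 1),
        qBinom q n k * q ^ (-((k : ℤ) * ((n : ℤ) - (k : ℤ)))) * a ^ k ≤
          (n.choose k : ℝ) * a ^ k * q ^ (-((n : ℝ) ^ 2) / 4) := by
      intro k hk
      have hk' : k ≤ n := Nat.lt_succ_iff.mp (Finset.mem_range.mp hk)
      have hz : q ^ (-((k : ℤ) * ((n : ℤ) - (k : ℤ)))) =
          q ^ (-((k : ℝ) * ((n : ℝ) - (k : ℝ)))) := by
        rw [← Real.rpow_intCast q (-((k : ℤ) * ((n : ℤ) - (k : ℤ))))]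
        push_cast
        ring_nf
      have hqle : q ^ (-((k : ℝ) * ((n : ℝ) - (k : ℝ)))) ≤ q ^ (-((n : ℝ) ^ 2) / 4) := by
        apply Real.rpow_le_rpow_of_exponent_ge hq0 hq1.le
        have hc : (k : ℝ) ≤ (n : ℝ) := by exact_mod_cast hk'
        nlinarith [sq_nonneg ((n : ℝ) - 2 * (k : ℝ))]
      have hb := qBinom_le_choose hq0 hq1 n k hk'
      have hbpos : (0 : ℝ) < qBinom q n k :=
        lt_of_lt_of_le one_pos (qBinom_ge_one hq0 hq1 hk')
      have hQpos : (0 : ℝ) < q ^ (-((k : ℝ) * ((n : ℝ) - (k : ℝ)))) :=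
        Real.rpow_pos_of_pos hq0 _
      have hapos : (0 : ℝ) < a ^ k := pow_pos ha k
      rw [hz]
      calc qBinom q n k * q ^ (-((k : ℝ) * ((n : ℝ) - (k : ℝ)))) * a ^ k
          ≤ (n.choose k : ℝ) * q ^ (-((n : ℝ) ^ 2) / 4) * a ^ k := by
            apply mul_le_mul_of_nonneg_right _ hapos.le
            exact mul_le_mul hb hqle hQpos.le (by positivity)
        _ = (n.choose k : ℝ) * a ^ k * q ^ (-((n : ℝ) ^ 2) / 4) := by ring
    calc ∑ k ∈ range (n + 1), qBinom q n k * q ^ (-((k : ℤ) * ((n : ℤ) - (k : ℤ)))) * a ^ k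
        ≤ ∑ k ∈ range (n + 1), (n.choose k : ℝ) * a ^ k * q ^ (-((n : ℝ) ^ 2) / 4) :=
          Finset.sum_le_sum step
      _ = (∑ k ∈ range (n + 1), a ^ k * 1 ^ (n - k) * (n.choose k : ℝ)) *
            q ^ (-((n : ℝ) ^ 2) / 4) := by
          rw [← Finset.sum_mul]
          congr 1
          exact Finset.sum_congr rfl fun k _ => by ring
      _ = (1 + a) ^ n * q ^ (-((n : ℝ) ^ 2) / 4) := by
          rw [← add_pow a 1 n, add_comm a 1]
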